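/- For each ε > 0 and each natural number n ≥ 2, there is a continuous retraction F from X_{ε,n} onto Γ_{ε,n} satisfying ‖F(t) − t‖_∞ ≤ ε for all t ∈ X_{ε,n}. Here Γ_{ε,n} is the set of points t = (t₁,…,tₙ) in ℝⁿ such that tⱼ ∈ εℤ for all but at most one index j, and X_{ε,n} is the set of t in ℝⁿ such that at most one coordinate tⱼ lies in (ℤ + 1/2)ε. -/

import Mathlib

open Filter Set Topology

noncomputable section Stmt5Aux

/-- positive part of `s` -/
private def sp (s : ℝ) : ℝ := max s 0

/-- clamp of `w` to `[-sp s, sp s]` -/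
private def clf (s w : ℝ) : ℝ := max (-(sp s)) (min (sp s) w)

/-- the basic one-dimensional retraction with flat zone of half-width `sp s` -/
private def G (s x : ℝ) : ℝ :=
  round x + ((x - round x) - clf s (x - round x)) / (1 - 2 * sp s)

/-- distance to the integers -/
private def dd (x : ℝ) : ℝ := |Int.fract (x + 1/2) - 1/2|

private lemma sp_nonneg (s : ℝ) : 0 ≤ sp s := le_max_right _ _

private lemma continuous_sp : Continuous sp := continuous_id.max continuous_const

private lemma w_lb (x : ℝ) : -(1/2 : ℝ) ≤ x - round x := by
  rw [round_eq]
  have := Int.floor_le (x + 1/2)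
  linarith

private lemma w_ub (x : ℝ) : x - round x < 1/2 := by
  rw [round_eq]
  have := Int.lt_floor_add_one (x + 1/2)
  linarith

private lemma w_abs (x : ℝ) : |x - round x| ≤ 1/2 :=
  abs_le.2 ⟨w_lb x, (w_ub x).le⟩

private lemma round_eq_of {x : ℝ} {m : ℤ} (h1 : (m : ℝ) - 1/2 ≤ x) (h2 : x < m + 1/2) :
    round x = m := by
  rw [round_eq, Int.floor_eq_iff]
  refine ⟨by linarith, by linarith⟩

private lemma dd_eq (x : ℝ) : dd x = |x - round x| := by
  have : Int.fract (x + 1/2) = x + 1/2 - ⌊x + 1/2⌋ := rfl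
  rw [dd, this, round_eq]
  ring_nf

private lemma dd_cont : Continuous dd := by
  have h : Continuous fun y : ℝ => |Int.fract y - 1/2| := by
    apply ContinuousOn.comp_fract'' (f := fun v : ℝ => |v - 1/2|)
    · exact (continuous_id.sub continuous_const).abs.continuousOn
    · norm_num
  exact h.comp (continuous_id.add continuous_const)

private lemma dd_le_half (x : ℝ) : dd x ≤ 1/2 := by rw [dd_eq]; exact w_abs x

private lemma dd_nonneg (x : ℝ) : 0 ≤ dd x := by rw [dd_eq]; exact abs_nonneg _

private lemma dd_int (m : ℤ) : dd (m : ℝ) = 0 := by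
  rw [dd_eq, round_intCast, sub_self, abs_zero]

private lemma dd_eq_half_iff {x : ℝ} : dd x = 1/2 ↔ ∃ m : ℤ, x = m + 1/2 := by
  rw [dd_eq]
  constructor
  · intro h
    have h1 := w_ub x
    have h2 : x - round x = -(1/2) := by
      rcases abs_eq (by norm_num : (0:ℝ) ≤ 1/2) |>.1 h with h' | h'
      · linarith
      · exact h'
    exact ⟨round x - 1, by push_cast; linarith⟩
  · rintro ⟨m, rfl⟩
    have : round ((m : ℝ) + 1/2) = m + 1 := by
      apply round_eq_of <;> push_cast <;> linarith
    rw [this]; push_cast; rw [abs_of_nonpos] <;> linarith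

private lemma clf_eq_self {s w : ℝ} (h : |w| ≤ sp s) : clf s w = w := by
  rw [abs_le] at h
  rw [clf, min_eq_right h.2, max_eq_right h.1]

private lemma G_eq_round {s x : ℝ} (h : |x - round x| ≤ sp s) : G s x = round x := by
  rw [G, clf_eq_self h, sub_self, zero_div, add_zero]

private lemma G_int {s : ℝ} (m : ℤ) : G s (m : ℝ) = m := by
  rw [G_eq_round (by rw [round_intCast, sub_self, abs_zero]; exact sp_nonneg s), round_intCast]

private lemma G_id {s x : ℝ} (h : s ≤ 0) : G s x = x := by
  have hs : sp s = 0 := max_eq_right h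
  have hc : clf s (x - round x) = 0 := by
    rw [clf, hs, neg_zero]
    rcases le_total (x - round x) 0 with h' | h'
    · rw [min_eq_right (h'.trans (by norm_num)), max_eq_left h']
    · rw [min_eq_left h', max_eq_right le_rfl]
  rw [G, hc, hs]
  ring

private lemma G_dist (s x : ℝ) : |G s x - x| ≤ 1/2 := by
  set w := x - round x with hw
  have hlb := w_lb x
  have hub := w_ub x
  have hsp := sp_nonneg s
  rcases le_or_gt |w| (sp s) with h | h
  · rw [G_eq_round h]
    rw [abs_sub_comm]
    exact w_abs x
  · have hden : 0 < 1 - 2 * sp s := by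
      have : sp s < 1/2 := lt_of_lt_of_le h (w_abs x)
      linarith
    have hG : G s x - x = (w - clf s w) / (1 - 2 * sp s) - w := by
      rw [G, hw]; ring
    rcases le_or_gt 0 w with hw0 | hw0
    · have hws : sp s < w := by rwa [abs_of_nonneg hw0] at h
      have hclf : clf s w = sp s := by
        rw [clf, min_eq_left hws.le, max_eq_right (by linarith)]
      rw [hG, hclf]
      have hq0 : 0 ≤ (w - sp s) / (1 - 2 * sp s) := div_nonneg (by linarith) hden.le
      have hqw : (w - sp s) / (1 - 2 * sp s) ≤ w := by
        rw [div_le_iff₀ hden]; nlinarith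
      rw [abs_of_nonpos (by linarith)]
      linarith
    · have hws : w < -(sp s) := by
        rw [abs_of_neg hw0] at h; linarith
      have hclf : clf s w = -(sp s) := by
        rw [clf, min_eq_right (by linarith), max_eq_left hws.le]
      rw [hG, hclf]
      have hq0 : (w - -(sp s)) / (1 - 2 * sp s) ≤ 0 := by
        apply div_nonpos_of_nonpos_of_nonneg <;> linarith
      have hqw : w ≤ (w - -(sp s)) / (1 - 2 * sp s) := by
        rw [le_div_iff₀ hden]; nlinarith
      rw [abs_of_nonneg (by linarith)]
      linarith

private lemma clf_cont : Continuous fun p : ℝ × ℝ => clf p.1 p.2 :=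
  ((continuous_sp.comp continuous_fst).neg).max
    ((continuous_sp.comp continuous_fst).min continuous_snd)

private lemma G_contOn :
    ContinuousOn (fun p : ℝ × ℝ => G p.1 p.2) {p : ℝ × ℝ | p.1 < 1/2 ∨ dd p.2 ≠ 1/2} := by
  apply continuousOn_of_forall_continuousAt
  rintro ⟨s₀, x₀⟩ hp
  simp only [Set.mem_setOf_eq] at hp
  by_cases hx : dd x₀ = 1/2
  · -- x₀ is a half-integer; then s₀ < 1/2
    have hs : s₀ < 1/2 := hp.resolve_right (by simpa using hx)
    obtain ⟨m, hm⟩ := dd_eq_half_iff.1 hx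
    set σ := sp s₀ with hσdef
    have hσ0 : 0 ≤ σ := sp_nonneg s₀
    have hσ : σ < 1/2 := max_lt hs (by norm_num)
    set δ := (1/2 - σ)/4 with hδdef
    have hδ : 0 < δ := by simp only [hδdef]; linarith
    have hδ8 : δ ≤ 1/8 := by simp only [hδdef]; linarith
    -- continuous local model
    have hM : ContinuousAt (fun p : ℝ × ℝ => x₀ + (p.2 - x₀) / (1 - 2 * sp p.1)) (s₀, x₀) := by
      apply ContinuousAt.add continuousAt_const
      apply ContinuousAt.div
      · exact (continuous_snd.sub continuous_const).continuousAt
      · exact (continuous_const.sub (continuous_const.mul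
          (continuous_sp.comp continuous_fst))).continuousAt
      · simp only [← hσdef]; intro h; rw [sub_eq_zero] at h; linarith [h.symm]
    apply hM.congr
    rw [Filter.EventuallyEq, Metric.eventually_nhds_iff]
    refine ⟨δ, hδ, ?_⟩
    rintro ⟨s, x⟩ hdist
    rw [Prod.dist_eq, max_lt_iff, Real.dist_eq, Real.dist_eq] at hdist
    obtain ⟨hd1, hd2⟩ := hdist
    rw [abs_lt] at hd1 hd2
    have hσs : s₀ ≤ σ := le_max_left _ _
    have hspB : sp s ≤ 1/2 - 3*δ := by
      have h1 : σ + δ = 1/2 - 3*δ := by simp only [hδdef]; ring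
      exact max_le (by linarith) (by linarith)
    have hsp0 : 0 ≤ sp s := sp_nonneg s
    have hden : (0:ℝ) < 1 - 2 * sp s := by linarith
    show x₀ + (x - x₀) / (1 - 2 * sp s) = G s x
    rcases lt_or_ge x x₀ with hxx | hxx
    · have hro : round x = m := round_eq_of (by linarith [hm]) (by linarith [hm])
      have hw : sp s < x - (m:ℝ) := by linarith [hm]
      have hclf : clf s (x - (m:ℝ)) = sp s := by
        rw [clf, min_eq_left hw.le, max_eq_right (by linarith)]
      simp only [G, hro, hclf, hm]
      field_simp
      ring
    · have hro : round x = m + 1 :=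
        round_eq_of (by push_cast; linarith [hm]) (by push_cast; linarith [hm])
      have hw : x - ((m:ℝ) + 1) < -(sp s) := by linarith [hm]
      have hclf : clf s (x - ((m:ℝ) + 1)) = -(sp s) := by
        rw [clf, min_eq_right (by linarith), max_eq_left hw.le]
      simp only [G, hro, hm]
      push_cast
      rw [hclf]
      field_simp
      ring
  · -- x₀ not a half-integer
    have hdx : dd x₀ < 1/2 := lt_of_le_of_ne (dd_le_half x₀) hx
    set m := round x₀ with hmdef
    have hround : ∀ x : ℝ, |x - x₀| < 1/2 - dd x₀ → round x = m := by
      intro x h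
      have h1 : |x₀ - (m:ℝ)| = dd x₀ := by rw [dd_eq]
      have h2 : |x - (m:ℝ)| < 1/2 := by
        calc |x - (m:ℝ)| ≤ |x - x₀| + |x₀ - (m:ℝ)| := abs_sub_le _ _ _
        _ < 1/2 := by rw [h1]; linarith
      rw [abs_lt] at h2
      exact round_eq_of (by linarith) (by linarith)
    by_cases hs : s₀ = 1/2
    · -- locally constant equal to m
      have hev : (fun p : ℝ × ℝ => G p.1 p.2) =ᶠ[𝓝 (s₀, x₀)] fun _ => (m : ℝ) := by
        rw [Filter.EventuallyEq, Metric.eventually_nhds_iff]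
        refine ⟨(1/2 - dd x₀)/2, by linarith, ?_⟩
        rintro ⟨s, x⟩ hdist
        rw [Prod.dist_eq, max_lt_iff, Real.dist_eq, Real.dist_eq] at hdist
        obtain ⟨hd1, hd2⟩ := hdist
        have hro : round x = m := hround x (by rw [abs_lt] at hd2 ⊢; constructor <;> linarith)
        have hwb : |x - (m:ℝ)| < dd x₀ + (1/2 - dd x₀)/2 := by
          have h1 : |x₀ - (m:ℝ)| = dd x₀ := by rw [dd_eq]
          calc |x - (m:ℝ)| ≤ |x - x₀| + |x₀ - (m:ℝ)| := abs_sub_le _ _ _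
          _ < _ := by rw [h1]; linarith
        have hsbig : dd x₀ + (1/2 - dd x₀)/2 ≤ sp s := by
          have : s₀ - (1/2 - dd x₀)/2 < s := by rw [abs_lt] at hd1; linarith
          have h2 : dd x₀ + (1/2 - dd x₀)/2 ≤ s := by rw [hs] at this; linarith
          exact h2.trans (le_max_left _ _)
        show G s x = (m : ℝ)
        rw [G_eq_round (by rw [hro]; linarith), hro]
      exact (continuousAt_const (y := (m:ℝ))).congr hev.symm
    · -- standard local formula, denominator nonzero
      have hden : 1 - 2 * sp s₀ ≠ 0 := by
        intro h
        rw [sub_eq_zero] at h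
        rcases le_total s₀ 0 with h' | h'
        · rw [sp, max_eq_right h'] at h; norm_num at h
        · rw [sp, max_eq_left h'] at h; exact hs (by linarith)
      have hM : ContinuousAt (fun p : ℝ × ℝ =>
          (m:ℝ) + ((p.2 - m) - clf p.1 (p.2 - m)) / (1 - 2 * sp p.1)) (s₀, x₀) := by
        apply ContinuousAt.add continuousAt_const
        apply ContinuousAt.div
        · refine Continuous.continuousAt ?_
          exact (continuous_snd.sub continuous_const).sub
            (clf_cont.comp ((continuous_fst).prodMk (continuous_snd.sub continuous_const)))
        · exact (continuous_const.sub (continuous_const.mul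
            (continuous_sp.comp continuous_fst))).continuousAt
        · exact hden
      apply hM.congr
      rw [Filter.EventuallyEq, Metric.eventually_nhds_iff]
      refine ⟨1/2 - dd x₀, by linarith, ?_⟩
      rintro ⟨s, x⟩ hdist
      rw [Prod.dist_eq, max_lt_iff, Real.dist_eq, Real.dist_eq] at hdist
      have hro : round x = m := hround x hdist.2
      show (m:ℝ) + _ = G s x
      rw [G, hro]

private lemma erase_nonempty {n : ℕ} (hn : 2 ≤ n) (j : Fin n) :
    (Finset.univ.erase j).Nonempty := by
  rw [← Finset.card_pos, Finset.card_erase_of_mem (Finset.mem_univ j)]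
  simp only [Finset.card_univ, Fintype.card_fin]
  omega

private def SS (ε : ℝ) {n : ℕ} (hn : 2 ≤ n) (j : Fin n) (t : Fin n → ℝ) : ℝ :=
  (Finset.univ.erase j).sup' (erase_nonempty hn j) fun k => dd (t k / ε)

private def FF (ε : ℝ) {n : ℕ} (hn : 2 ≤ n) (t : Fin n → ℝ) (j : Fin n) : ℝ :=
  ε * G (SS ε hn j t) (t j / ε)

private lemma SS_nonneg (ε : ℝ) {n : ℕ} (hn : 2 ≤ n) (j : Fin n) (t : Fin n → ℝ) :
    0 ≤ SS ε hn j t := by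
  obtain ⟨k, hk⟩ := erase_nonempty hn j
  exact le_trans (dd_nonneg (t k / ε)) (Finset.le_sup' (fun k => dd (t k / ε)) hk)

private lemma SS_cont (ε : ℝ) {n : ℕ} (hn : 2 ≤ n) (j : Fin n) : Continuous (SS ε hn j) :=
  Continuous.finset_sup'_apply (erase_nonempty hn j)
    (fun k _ => dd_cont.comp (by fun_prop))

private lemma le_SS (ε : ℝ) {n : ℕ} (hn : 2 ≤ n) {j k : Fin n} (hkj : k ≠ j) (t : Fin n → ℝ) :
    dd (t k / ε) ≤ SS ε hn j t :=
  Finset.le_sup' (fun k => dd (t k / ε)) (Finset.mem_erase.2 ⟨hkj, Finset.mem_univ _⟩)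

end Stmt5Aux

/-- For every `ε > 0` and `n ≥ 2` there is a continuous retraction
`F : X_{ε,n} → Γ_{ε,n}` moving no point by more than `ε` in the sup-norm, where
`Γ_{ε,n}` consists of the points of `ℝⁿ` having all but at most one coordinate in `εℤ`,
and `X_{ε,n}` consists of the points having at most one coordinate in `(ℤ + 1/2)ε`. -/
theorem stmt5 (ε : ℝ) (hε : 0 < ε) (n : ℕ) (hn : 2 ≤ n) :
    ∃ F : (Fin n → ℝ) → (Fin n → ℝ),
      ContinuousOn F {t : Fin n → ℝ | Set.Subsingleton {j | ∃ m : ℤ, t j = ε * (m + 1/2)}} ∧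
      Set.MapsTo F {t : Fin n → ℝ | Set.Subsingleton {j | ∃ m : ℤ, t j = ε * (m + 1/2)}}
        {t : Fin n → ℝ | Set.Subsingleton {j | ∀ m : ℤ, t j ≠ ε * m}} ∧
      (∀ t ∈ {t : Fin n → ℝ | Set.Subsingleton {j | ∀ m : ℤ, t j ≠ ε * m}}, F t = t) ∧
      (∀ t ∈ {t : Fin n → ℝ | Set.Subsingleton {j | ∃ m : ℤ, t j = ε * (m + 1/2)}},
        ‖F t - t‖ ≤ ε) := by
  have hεne : ε ≠ 0 := ne_of_gt hε
  have hhalf : ∀ (t : Fin n → ℝ) (j : Fin n),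
      (∃ m : ℤ, t j = ε * (m + 1/2)) ↔ dd (t j / ε) = 1/2 := by
    intro t j
    rw [dd_eq_half_iff]
    constructor
    · rintro ⟨m, hm⟩
      exact ⟨m, by rw [hm]; field_simp⟩
    · rintro ⟨m, hm⟩
      rw [div_eq_iff hεne] at hm
      exact ⟨m, by rw [hm]; ring⟩
  refine ⟨FF ε hn, ?_, ?_, ?_, ?_⟩
  · -- continuity
    rw [continuousOn_pi]
    intro j
    show ContinuousOn (fun t : Fin n → ℝ => ε * G (SS ε hn j t) (t j / ε)) _
    apply ContinuousOn.mul continuousOn_const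
    have hpair : Continuous fun t : Fin n → ℝ => ((SS ε hn j t, t j / ε) : ℝ × ℝ) :=
      (SS_cont ε hn j).prodMk (by fun_prop)
    have hmaps : Set.MapsTo (fun t : Fin n → ℝ => ((SS ε hn j t, t j / ε) : ℝ × ℝ))
        {t : Fin n → ℝ | Set.Subsingleton {j | ∃ m : ℤ, t j = ε * (m + 1/2)}}
        {p : ℝ × ℝ | p.1 < 1/2 ∨ dd p.2 ≠ 1/2} := ?_
    · exact ContinuousOn.comp (g := fun p : ℝ × ℝ => G p.1 p.2)
        (f := fun t : Fin n → ℝ => ((SS ε hn j t, t j / ε) : ℝ × ℝ))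
        (s := {t : Fin n → ℝ | Set.Subsingleton {j | ∃ m : ℤ, t j = ε * (m + 1/2)}})
        (t := {p : ℝ × ℝ | p.1 < 1/2 ∨ dd p.2 ≠ 1/2})
        G_contOn hpair.continuousOn hmaps
    intro t ht
    simp only [Set.mem_setOf_eq]
    by_cases hj : dd (t j / ε) = 1/2
    · left
      by_contra h
      push_neg at h
      obtain ⟨k, hk, hks⟩ :=
        Finset.exists_mem_eq_sup' (erase_nonempty hn j) (fun k => dd (t k / ε))
      have hkj : k ≠ j := (Finset.mem_erase.1 hk).1
      have hSk : SS ε hn j t = dd (t k / ε) := hks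
      have hk2 : dd (t k / ε) = 1/2 := le_antisymm (dd_le_half _) (by rw [← hSk]; exact h)
      exact hkj (ht ((hhalf t k).2 hk2) ((hhalf t j).2 hj))
    · right; exact hj
  · -- maps into Γ
    intro t _
    simp only [Set.mem_setOf_eq]
    have key : ∀ j : Fin n, (∀ m : ℤ, FF ε hn t j ≠ ε * m) → SS ε hn j t < dd (t j / ε) := by
      intro j hj
      by_contra h
      push_neg at h
      refine hj (round (t j / ε)) ?_
      show ε * G (SS ε hn j t) (t j / ε) = _
      rw [G_eq_round (le_trans (by rw [← dd_eq]; exact h) (le_max_left _ _))]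
    intro j₁ hj₁ j₂ hj₂
    by_contra hne12
    have h1 := key j₁ hj₁
    have h2 := key j₂ hj₂
    have h12 : dd (t j₂ / ε) ≤ SS ε hn j₁ t := le_SS ε hn (Ne.symm hne12) t
    have h21 : dd (t j₁ / ε) ≤ SS ε hn j₂ t := le_SS ε hn hne12 t
    linarith
  · -- retraction on Γ
    intro t ht
    funext j
    by_cases hj : ∃ m : ℤ, t j = ε * m
    · obtain ⟨m, hm⟩ := hj
      have hdiv : t j / ε = m := by rw [hm]; field_simp
      show ε * G (SS ε hn j t) (t j / ε) = t j
      rw [hdiv, G_int, hm]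
    · push_neg at hj
      have hall : ∀ k, k ∈ Finset.univ.erase j → dd (t k / ε) ≤ 0 := by
        intro k hk
        have hkj : k ≠ j := (Finset.mem_erase.1 hk).1
        by_cases hk2 : ∃ m : ℤ, t k = ε * m
        · obtain ⟨m, hm⟩ := hk2
          have hdiv : t k / ε = m := by rw [hm]; field_simp
          rw [hdiv, dd_int]
        · push_neg at hk2
          exact absurd (ht hk2 hj) hkj
      have hS0 : SS ε hn j t ≤ 0 := Finset.sup'_le _ _ hall
      show ε * G (SS ε hn j t) (t j / ε) = t j
      rw [G_id hS0]
      field_simp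
  · -- moves points at most ε
    intro t _
    rw [pi_norm_le_iff_of_nonneg hε.le]
    intro j
    have hdiff : FF ε hn t j - t j = ε * (G (SS ε hn j t) (t j / ε) - t j / ε) := by
      show ε * G (SS ε hn j t) (t j / ε) - t j = _
      rw [mul_sub]
      congr 1
      field_simp
    rw [Pi.sub_apply, Real.norm_eq_abs, hdiff, abs_mul, abs_of_pos hε]
    calc ε * |G (SS ε hn j t) (t j / ε) - t j / ε| ≤ ε * (1/2) :=
          mul_le_mul_of_nonneg_left (G_dist _ _) hε.le
      _ ≤ ε := by linarith
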